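/- arXiv:1012.0984 — 2 statements merged into one kernel-verified Lean document; each statement's English description precedes it below -/
import Mathlib

section
/- Let G be a finite group with a minimal normal subgroup W of order m. Suppose G is isomorphic to a quotient H/N where H is a subgroup of a direct product H₁ × ... × Hₛ of finite groups. Then |Hᵢ| ≥ m for some index i. -/
section aux

variable {s : ℕ} (Hs : Fin s → Type*) [∀ i, Group (Hs i)]
  (H : Subgroup (∀ i, Hs i))

/-- Elements of `H` whose coordinates below `i` are trivial. -/
def auxK (i : ℕ) : Subgroup H where
  carrier := {h | ∀ j : Fin s, (j : ℕ) < i → (h : ∀ k, Hs k) j = 1}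
  one_mem' := by intro j hj; rfl
  mul_mem' := by
    intro a b ha hb j hj
    have := ha j hj; have := hb j hj
    simp [Subgroup.coe_mul, Pi.mul_apply, *]
  inv_mem' := by
    intro a ha j hj
    have := ha j hj
    simp [Pi.inv_apply, *]

theorem auxK_normal (i : ℕ) : (auxK Hs H i).Normal := by
  constructor
  intro a ha g j hj
  have h1 := ha j hj
  simp [auxK, Subgroup.coe_mul, Pi.mul_apply] at h1 ⊢
  simp [h1]

end aux

/-- Let `G` be a finite group with a minimal normal subgroup `W` of order `m`.
Suppose `G` is isomorphic to a quotient `H/N` where `H` is a subgroup of a direct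
product `H₁ × ... × Hₛ` of finite groups.  Then `|Hᵢ| ≥ m` for some index `i`. -/
theorem stmt0 {G : Type*} [Group G] [Finite G] (W : Subgroup G) (hWnormal : W.Normal)
    (hWne : W ≠ ⊥)
    (hWmin : ∀ W' : Subgroup G, W'.Normal → W' ≤ W → W' ≠ ⊥ → W' = W)
    {s : ℕ} (Hs : Fin s → Type*) [∀ i, Group (Hs i)] [∀ i, Finite (Hs i)]
    (H : Subgroup (∀ i, Hs i)) (N : Subgroup H) [N.Normal]
    (e : G ≃* H ⧸ N) :
    ∃ i, Nat.card W ≤ Nat.card (Hs i) := by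
  classical
  -- the surjection φ : H → G
  set φ : H →* G := (e.symm.toMonoidHom).comp (QuotientGroup.mk' N) with hφ
  have hφsurj : Function.Surjective φ := by
    intro g
    obtain ⟨h, hh⟩ := QuotientGroup.mk'_surjective N (e g)
    refine ⟨h, ?_⟩
    show e.symm ((QuotientGroup.mk' N) h) = g
    rw [hh]; simp
  set K : ℕ → Subgroup H := auxK Hs H with hK
  set V : ℕ → Subgroup G := fun i => (K i).map φ with hV
  have hVnormal : ∀ i, (V i).Normal := fun i => (auxK_normal Hs H i).map φ hφsurj
  have hV0 : V 0 = ⊤ := by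
    rw [hV]
    have : K 0 = ⊤ := by
      ext h; simp [hK, auxK]
    simp only [this]
    rw [← MonoidHom.range_eq_map, MonoidHom.range_eq_top]
    exact hφsurj
  have hVs : V s = ⊥ := by
    have : K s = ⊥ := by
      ext h
      simp only [hK, auxK, Subgroup.mem_mk, Set.mem_setOf_eq, Subgroup.mem_bot]
      constructor
      · intro hh
        ext j
        exact hh j j.isLt
      · rintro rfl j hj; rfl
    simp [hV, this]
  -- find the transition index
  set P : ℕ → Prop := fun i => W ⊓ V i = ⊥ with hP
  have hPs : P s := by simp [hP, hVs]
  have hex : ∃ i, P i := ⟨s, hPs⟩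
  have hPn := Nat.find_spec hex
  have hn0 : Nat.find hex ≠ 0 := by
    intro h0
    rw [h0] at hPn
    rw [hP] at hPn
    simp only [hV0, inf_top_eq] at hPn
    exact hWne hPn
  obtain ⟨i, hni⟩ : ∃ i, Nat.find hex = i + 1 :=
    ⟨Nat.find hex - 1, (Nat.succ_pred_eq_of_ne_zero hn0).symm⟩
  rw [hni] at hPn
  have hPi : ¬ P i := Nat.find_min hex (by rw [hni]; exact Nat.lt_succ_self i)
  have his : i < s := by
    by_contra hge
    push_neg at hge
    have : V i = ⊥ := by
      have : K i = ⊥ := by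
        ext h
        simp only [hK, auxK, Subgroup.mem_mk, Set.mem_setOf_eq, Subgroup.mem_bot]
        constructor
        · intro hh
          ext j
          exact hh j (lt_of_lt_of_le j.isLt hge)
        · rintro rfl j hj; rfl
      simp [hV, this]
    exact hPi (by simp [hP, this])
  -- W ≤ V i by minimality
  have hWVi : W ≤ V i := by
    have hmin := hWmin (W ⊓ V i) (@Subgroup.normal_inf_normal _ _ W (V i) hWnormal (hVnormal i)) inf_le_left hPi
    rw [← hmin]; exact inf_le_right
  have hWVi1 : W ⊓ V (i + 1) = ⊥ := hPn
  -- build an injection W → Hs ⟨i, his⟩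
  set ι : Fin s := ⟨i, his⟩ with hι
  have hchoose : ∀ w : W, ∃ x : H, x ∈ K i ∧ φ x = (w : G) := by
    intro w
    obtain ⟨x, hx, hxw⟩ := hWVi w.2
    exact ⟨x, hx, hxw⟩
  choose x hxK hxφ using hchoose
  have hinj : Function.Injective (fun w : W => ((x w : ∀ k, Hs k) ι)) := by
    intro w w' hww
    simp only at hww
    -- x w * (x w')⁻¹ ∈ K (i+1)
    have hmem : x w * (x w')⁻¹ ∈ K (i + 1) := by
      intro j hj
      rcases lt_or_eq_of_le (Nat.lt_succ_iff.mp hj) with hj' | hj'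
      · have h1 := hxK w j hj'
        have h2 := hxK w' j hj'
        simp [Subgroup.coe_mul, Pi.mul_apply, h1, h2]
      · have hji : j = ι := by ext; exact hj'
        subst hji
        simp [Subgroup.coe_mul, Pi.mul_apply, hww]
    have hVmem : (w : G) * (w' : G)⁻¹ ∈ V (i + 1) := by
      refine ⟨x w * (x w')⁻¹, hmem, ?_⟩
      simp [hxφ w, hxφ w']
    have hWmem : (w : G) * (w' : G)⁻¹ ∈ W := mul_mem w.2 (inv_mem w'.2)
    have : (w : G) * (w' : G)⁻¹ ∈ W ⊓ V (i + 1) := ⟨hWmem, hVmem⟩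
    rw [hWVi1, Subgroup.mem_bot] at this
    have : (w : G) = (w' : G) := by
      rwa [mul_inv_eq_one] at this
    exact Subtype.ext this
  exact ⟨ι, Nat.card_le_card_of_injective _ hinj⟩
end

section
/- Let p be a prime and G a p-group of order p^(2m+1) whose center Z(G) and commutator subgroup G' both have order p. Then every abelian subgroup of G has order at most p^(m+1). -/
universe u v

open scoped commutatorElement IsMulCommutative

/-- For a finite commutative group `E` of exponent dividing a prime `p` and a group `Z`
of order `p`, the number of homomorphisms `E →* Z` is at most `|E|`. -/
lemma aux_hom_card_le {p : ℕ} (hp : p.Prime) {Z : Type v} [CommGroup Z] [Finite Z]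
    (hZ : Nat.card Z = p) :
    ∀ (n : ℕ) (E : Type u) [CommGroup E] [Finite E], Nat.card E ≤ n →
      (∀ e : E, e ^ p = 1) → Nat.card (E →* Z) ≤ Nat.card E := by
  intro n
  induction n with
  | zero =>
    intro E _ _ hcard _
    have := Nat.card_pos (α := E)
    omega
  | succ n ih =>
    intro E _ _ hcard hexp
    haveI : Finite (E →* Z) :=
      Finite.of_injective (fun f => (f : E → Z)) DFunLike.coe_injective
    by_cases hE : ∀ e : E, e = 1
    · have hsub : Subsingleton (E →* Z) :=
        ⟨fun f g => MonoidHom.ext fun e => by rw [hE e, map_one, map_one]⟩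
      exact Nat.card_le_card_of_injective (fun _ => (1 : E))
        (fun a b _ => Subsingleton.elim a b)
    · push_neg at hE
      obtain ⟨e, he⟩ := hE
      have horder : orderOf e = p := by
        have h1 : orderOf e ∣ p := orderOf_dvd_of_pow_eq_one (hexp e)
        rcases (Nat.dvd_prime hp).mp h1 with h | h
        · exact absurd (orderOf_eq_one_iff.mp h) he
        · exact h
      set N := Subgroup.zpowers e with hN
      -- evaluation at e
      let ev : (E →* Z) →* Z :=
        { toFun := fun f => f e
          map_one' := rfl
          map_mul' := fun f g => rfl }
      have hsplit : Nat.card (E →* Z) = Nat.card ((E →* Z) ⧸ ev.ker) * Nat.card ev.ker :=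
        Subgroup.card_eq_card_quotient_mul_card_subgroup ev.ker
      have hq : Nat.card ((E →* Z) ⧸ ev.ker) = Nat.card ev.range :=
        Nat.card_congr (QuotientGroup.quotientKerEquivRange ev).toEquiv
      have hrange : Nat.card ev.range ≤ p := by
        rw [← hZ]
        exact Nat.card_le_card_of_injective _ Subtype.val_injective
      -- kernel embeds into homs from the quotient
      haveI : Finite (E ⧸ N) := Quotient.finite _
      haveI : Finite (E ⧸ N →* Z) :=
        Finite.of_injective (fun f => (f : E ⧸ N → Z)) DFunLike.coe_injective
      have hker : Nat.card ev.ker ≤ Nat.card (E ⧸ N →* Z) := by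
        have hlift : ∀ f : ev.ker, ∀ x ∈ N, (f : E →* Z) x = 1 := by
          rintro f x ⟨k, rfl⟩
          have hfe : (f : E →* Z) e = 1 := f.2
          rw [map_zpow, hfe, one_zpow]
        refine Nat.card_le_card_of_injective
          (fun f => QuotientGroup.lift N (f : E →* Z) (hlift f)) ?_
        intro f g hfg
        ext x
        have := congrArg (fun φ => φ ((x : E ⧸ N))) hfg
        exact this
      have hcardN : Nat.card N = p := by rw [hN, Nat.card_zpowers, horder]
      have hQcard : Nat.card E = Nat.card (E ⧸ N) * p := by
        rw [← hcardN]; exact Subgroup.card_eq_card_quotient_mul_card_subgroup N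
      have hQpos := Nat.card_pos (α := E ⧸ N)
      have hQle : Nat.card (E ⧸ N) ≤ n := by
        have h2 : 2 ≤ p := hp.two_le
        nlinarith [hQcard, hcard, hQpos]
      have hexpQ : ∀ x : E ⧸ N, x ^ p = 1 := by
        intro x
        refine QuotientGroup.induction_on x fun y => ?_
        rw [← QuotientGroup.mk_pow, hexp y, QuotientGroup.mk_one]
      have hih : Nat.card (E ⧸ N →* Z) ≤ Nat.card (E ⧸ N) := ih (E ⧸ N) hQle hexpQ
      calc Nat.card (E →* Z) = Nat.card ((E →* Z) ⧸ ev.ker) * Nat.card ev.ker := hsplit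
        _ = Nat.card ev.range * Nat.card ev.ker := by rw [hq]
        _ ≤ p * Nat.card (E ⧸ N) := Nat.mul_le_mul hrange (hker.trans hih)
        _ = Nat.card E := by rw [hQcard, Nat.mul_comm]

/-- Let `p` be a prime and `G` a `p`-group of order `p^(2m+1)` whose center and
commutator subgroup both have order `p` (an extraspecial group).  Then every
abelian subgroup of `G` has order at most `p^(m+1)`. -/
theorem stmt2 {p m : ℕ} (hp : p.Prime) {G : Type*} [Group G] [Finite G]
    (hcard : Nat.card G = p ^ (2 * m + 1))
    (hZ : Nat.card (Subgroup.center G) = p)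
    (hC : Nat.card (commutator G) = p)
    (A : Subgroup G) (hA : ∀ a b : A, a * b = b * a) :
    Nat.card A ≤ p ^ (m + 1) := by
  haveI : Fact p.Prime := ⟨hp⟩
  -- Step 1: the commutator subgroup is central
  have hKZ : commutator G ≤ Subgroup.center G := by
    haveI : IsCyclic (commutator G) := isCyclic_of_prime_card hC
    intro k hk
    rw [Subgroup.mem_center_iff]
    intro g
    set φ := (MulAut.conjNormal : G →* MulAut (commutator G)) with hφ
    have hcop : Nat.Coprime p (p - 1) := by
      refine hp.coprime_iff_not_dvd.mpr fun h => ?_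
      have h2 := hp.two_le
      have := Nat.le_of_dvd (by omega) h
      omega
    have hd1 : orderOf (φ g) ∣ p ^ (2 * m + 1) := by
      refine (orderOf_map_dvd φ g).trans ?_
      rw [← hcard]; exact orderOf_dvd_natCard g
    have hd2 : orderOf (φ g) ∣ p - 1 := by
      have hma := IsCyclic.card_mulAut (G := commutator G)
      rw [hC, Nat.totient_prime hp] at hma
      rw [← hma]; exact orderOf_dvd_natCard (φ g)
    have h1 : φ g = 1 := by
      rw [← orderOf_eq_one_iff]
      have := Nat.eq_one_of_dvd_coprimes (hcop.pow_left (2 * m + 1)) hd1 hd2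
      exact this
    have h2 : φ g ⟨k, hk⟩ = ⟨k, hk⟩ := by rw [h1]; rfl
    have h3 : g * k * g⁻¹ = k := by
      have := congrArg Subtype.val h2
      rwa [MulAut.conjNormal_apply] at this
    calc g * k = (g * k * g⁻¹) * g := by group
      _ = k * g := by rw [h3]
  have hmem : ∀ g h : G, ⁅g, h⁆ ∈ Subgroup.center G := fun g h =>
    hKZ (Subgroup.commutator_mem_commutator (Subgroup.mem_top g) (Subgroup.mem_top h))
  have hcent : ∀ g h x : G, x * ⁅g, h⁆ = ⁅g, h⁆ * x := fun g h x =>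
    Subgroup.mem_center_iff.mp (hmem g h) x
  -- bilinearity of the commutator pairing
  have bil_left : ∀ g h a : G, ⁅g * h, a⁆ = ⁅g, a⁆ * ⁅h, a⁆ := by
    intro g h a
    calc ⁅g * h, a⁆ = g * ⁅h, a⁆ * g⁻¹ * ⁅g, a⁆ := by group
      _ = ⁅h, a⁆ * g * g⁻¹ * ⁅g, a⁆ := by rw [hcent h a g]
      _ = ⁅h, a⁆ * ⁅g, a⁆ := by group
      _ = ⁅g, a⁆ * ⁅h, a⁆ := hcent g a _
  have bil_right : ∀ g a b : G, ⁅g, a * b⁆ = ⁅g, a⁆ * ⁅g, b⁆ := by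
    intro g a b
    calc ⁅g, a * b⁆ = ⁅g, a⁆ * (a * ⁅g, b⁆ * a⁻¹) := by group
      _ = ⁅g, a⁆ * (⁅g, b⁆ * a * a⁻¹) := by rw [hcent g b a]
      _ = ⁅g, a⁆ * ⁅g, b⁆ := by group
  set Zc := Subgroup.center G with hZc
  haveI : Finite (G →* Zc) :=
    Finite.of_injective (fun f => (f : G → Zc)) DFunLike.coe_injective
  -- the pairing homomorphism Ψ : A →* (G →* Zc)
  set Ψ : ↥A →* (G →* Zc) :=
    { toFun := fun a =>
      { toFun := fun g => ⟨⁅g, (a : G)⁆, hmem g a⟩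
        map_one' := Subtype.ext (commutatorElement_one_left _)
        map_mul' := fun g h => Subtype.ext (bil_left g h a) }
      map_one' := MonoidHom.ext fun g => Subtype.ext (by
        show ⁅g, ((1 : ↥A) : G)⁆ = 1
        rw [Subgroup.coe_one, commutatorElement_one_right])
      map_mul' := fun a b => MonoidHom.ext fun g => Subtype.ext (by
        show ⁅g, ((a * b : ↥A) : G)⁆ = ⁅g, (a : G)⁆ * ⁅g, (b : G)⁆
        rw [Subgroup.coe_mul]; exact bil_right g a b) } with hΨ
  set T := Ψ.range with hT
  haveI : Finite (↥T →* Zc) :=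
    Finite.of_injective (fun f => (f : ↥T → Zc)) DFunLike.coe_injective
  -- evaluation homomorphism ev : G →* (T →* Zc)
  set ev : G →* (↥T →* Zc) :=
    { toFun := fun g =>
      { toFun := fun f => (f : G →* Zc) g
        map_one' := rfl
        map_mul' := fun f₁ f₂ => rfl }
      map_one' := MonoidHom.ext fun f => map_one (f : G →* Zc)
      map_mul' := fun g₁ g₂ => MonoidHom.ext fun f => map_mul (f : G →* Zc) g₁ g₂ } with hev
  set E := ev.range with hE
  set C := Subgroup.centralizer (A : Set G) with hCtr
  -- A is contained in its centralizer
  have hAC : A ≤ C := by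
    intro a ha
    rw [hCtr, Subgroup.mem_centralizer_iff]
    intro b hb
    exact congrArg Subtype.val (hA ⟨b, hb⟩ ⟨a, ha⟩)
  -- the centralizer is contained in the kernel of ev
  have hCker : C ≤ ev.ker := by
    intro c hc
    rw [MonoidHom.mem_ker]
    ext f
    obtain ⟨a, haf⟩ := f.2
    have h1 : ((f : G →* Zc) c : G) = ⁅c, (a : G)⁆ := by
      rw [← haf]; rfl
    have h2 : ⁅c, (a : G)⁆ = 1 := by
      rw [commutatorElement_eq_one_iff_mul_comm]
      exact (Subgroup.mem_centralizer_iff.mp hc (a : G) a.2).symm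
    show ((f : G →* Zc) c : G) = 1
    rw [h1, h2]
  -- card A ≤ card T * p
  have hkerΨ : Nat.card Ψ.ker ≤ p := by
    rw [← hZ]
    refine Nat.card_le_card_of_injective
      (fun x => (⟨((x : ↥A) : G), ?_⟩ : Zc)) ?_
    · rw [Subgroup.mem_center_iff]
      intro g
      have hx : Ψ x.1 = 1 := x.2
      have := congrArg (fun φ => ((φ g : Zc) : G)) hx
      try simp only at this
      have h1 : ⁅g, ((x : ↥A) : G)⁆ = 1 := this
      rw [← commutatorElement_eq_one_iff_mul_comm]
      exact h1
    · intro x y hxy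
      have := congrArg Subtype.val hxy
      exact Subtype.ext (Subtype.ext this)
  have hAsplit : Nat.card A = Nat.card T * Nat.card Ψ.ker := by
    rw [Subgroup.card_eq_card_quotient_mul_card_subgroup Ψ.ker,
      Nat.card_congr (QuotientGroup.quotientKerEquivRange Ψ).toEquiv]
  have hAT : Nat.card A ≤ Nat.card T * p :=
    hAsplit ▸ Nat.mul_le_mul_left _ hkerΨ
  haveI : Finite (↥E →* Zc) :=
    Finite.of_injective (fun f => (f : ↥E → Zc)) DFunLike.coe_injective
  -- card T ≤ card (E →* Zc) via the double-dual pairing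
  have hTE : Nat.card T ≤ Nat.card (↥E →* Zc) := by
    refine Nat.card_le_card_of_injective (fun f =>
      ({ toFun := fun e => (e : ↥T →* Zc) f
         map_one' := rfl
         map_mul' := fun e₁ e₂ => rfl } : ↥E →* Zc)) ?_
    intro f₁ f₂ h
    have : ∀ g : G, (f₁ : G →* Zc) g = (f₂ : G →* Zc) g := by
      intro g
      have := congrArg (fun φ => φ (⟨ev g, g, rfl⟩ : ↥E)) h
      exact this
    exact Subtype.ext (MonoidHom.ext this)
  haveI : Finite ↥E := inferInstance
  -- card (E →* Zc) ≤ card E by duality counting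
  have hdual : Nat.card (↥E →* Zc) ≤ Nat.card E := by
    refine aux_hom_card_le hp hZ (Nat.card E) ↥E le_rfl ?_
    intro e
    ext t
    show ((e : ↥T →* Zc) t : G) ^ p = 1
    have : ((e : ↥T →* Zc) t) ^ p = 1 := by
      rw [← hZ]; exact pow_card_eq_one'
    calc ((e : ↥T →* Zc) t : G) ^ p = ((((e : ↥T →* Zc) t) ^ p : Zc) : G) := by norm_cast
      _ = ((1 : Zc) : G) := by rw [this]
      _ = 1 := rfl
  -- card E ≤ index C
  have hEC : Nat.card E ≤ C.index := by
    have h1 : ev.ker.index = Nat.card E := Subgroup.index_ker ev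
    have h2 : ev.ker.index ∣ C.index := Subgroup.index_dvd_of_le hCker
    have h3 : C.index ≠ 0 := Subgroup.index_ne_zero_of_finite
    rw [← h1]
    exact Nat.le_of_dvd (Nat.pos_of_ne_zero h3) h2
  have hACle : Nat.card A ≤ Nat.card C := Subgroup.card_le_of_le hAC
  have hCI : Nat.card C * C.index = p ^ (2 * m + 1) := by
    rw [Subgroup.card_mul_index, hcard]
  -- final arithmetic
  have key : Nat.card A * Nat.card A ≤ p ^ (2 * m + 2) := by
    calc Nat.card A * Nat.card A ≤ (Nat.card T * p) * Nat.card C :=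
          Nat.mul_le_mul hAT hACle
      _ ≤ (C.index * p) * Nat.card C := by
          have : Nat.card T ≤ C.index := hTE.trans (hdual.trans hEC)
          exact Nat.mul_le_mul_right _ (Nat.mul_le_mul_right _ this)
      _ = p * (Nat.card C * C.index) := by ring
      _ = p * p ^ (2 * m + 1) := by rw [hCI]
      _ = p ^ (2 * m + 2) := by ring
  have key2 : Nat.card A ^ 2 ≤ (p ^ (m + 1)) ^ 2 := by
    rw [pow_two, ← pow_mul]
    calc Nat.card A * Nat.card A ≤ p ^ (2 * m + 2) := key
      _ = p ^ ((m + 1) * 2) := by ring_nf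
  exact (Nat.pow_le_pow_iff_left (by norm_num)).mp key2
end
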